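/- For all x > 0, ψ(1/log(1 + 1/x)) < log x < ψ(x + 1/2), where ψ is the digamma function. -/

import Mathlib

open Real Set Filter Topology

noncomputable def digamma : ℝ → ℝ := deriv (fun y : ℝ => Real.log (Real.Gamma y))

lemma diffAt_logGamma {x : ℝ} (hx : 0 < x) :
    DifferentiableAt ℝ (fun y : ℝ => Real.log (Real.Gamma y)) x := by
  refine ((Real.differentiableAt_Gamma ?_).log (Real.Gamma_ne_zero ?_)) <;>
  exact fun m => by nlinarith [Nat.cast_nonneg (α := ℝ) m]

lemma digamma_rec {x : ℝ} (hx : 0 < x) : digamma (x + 1) = digamma x + 1 / x := by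
  unfold digamma
  rw [← deriv_comp_add_const, one_div, ← Real.deriv_log,
    ← deriv_add (diffAt_logGamma hx) (Real.differentiableAt_log hx.ne')]
  apply Filter.EventuallyEq.deriv_eq
  filter_upwards [eventually_gt_nhds hx] with y hy
  rw [Real.Gamma_add_one hy.ne', Real.log_mul hy.ne' (Real.Gamma_pos_of_pos hy).ne', add_comm]
  rfl

lemma convexOn_lg : ConvexOn ℝ (Set.Ioi 0) (fun y : ℝ => Real.log (Real.Gamma y)) := by
  have := Real.convexOn_log_Gamma
  rwa [Function.comp_def] at this

lemma digamma_le_log {y : ℝ} (hy : 0 < y) : digamma y ≤ Real.log y := by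
  have h := convexOn_lg.deriv_le_slope (Set.mem_Ioi.mpr hy)
    (Set.mem_Ioi.mpr (by linarith : (0:ℝ) < y + 1)) (by linarith) (diffAt_logGamma hy)
  rw [slope_def_field, show y + 1 - y = (1:ℝ) by ring, div_one, Real.Gamma_add_one hy.ne',
    Real.log_mul hy.ne' (Real.Gamma_pos_of_pos hy).ne', add_sub_cancel_right] at h
  exact h

lemma log_le_digamma {y : ℝ} (hy : 0 < y) : Real.log y ≤ digamma (y + 1) := by
  have h := convexOn_lg.slope_le_deriv (Set.mem_Ioi.mpr hy)
    (Set.mem_Ioi.mpr (by linarith : (0:ℝ) < y + 1)) (by linarith)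
    (diffAt_logGamma (by linarith : (0:ℝ) < y + 1))
  rw [slope_def_field, show y + 1 - y = (1:ℝ) by ring, div_one, Real.Gamma_add_one hy.ne',
    Real.log_mul hy.ne' (Real.Gamma_pos_of_pos hy).ne', add_sub_cancel_right] at h
  exact h

-- (i) midpoint inequality: 1/(y+1/2) < log (1 + 1/y) for y > 0
lemma aux_h_pos {u : ℝ} (hu0 : 0 < u) (hu1 : u < 1) :
    (1 - u) * Real.exp u < (1 + u) * Real.exp (-u) := by
  set h : ℝ → ℝ := fun u => (1 + u) * Real.exp (-u) - (1 - u) * Real.exp u with hh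
  have hd : ∀ v : ℝ, HasDerivAt h (v * (Real.exp v - Real.exp (-v))) v := by
    intro v
    have h1 : HasDerivAt (fun w : ℝ => (1 + w) * Real.exp (-w))
        (1 * Real.exp (-v) + (1 + v) * (-Real.exp (-v))) v := by
      have he : HasDerivAt (fun w : ℝ => Real.exp (-w)) (Real.exp (-v) * (-1)) v :=
        (Real.hasDerivAt_exp (-v)).comp v ((hasDerivAt_id v).neg)
      have := ((hasDerivAt_id v).const_add 1).mul he
      exact this.congr_deriv (by simp [id])
    have h2 : HasDerivAt (fun w : ℝ => (1 - w) * Real.exp w)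
        ((-1) * Real.exp v + (1 - v) * Real.exp v) v := by
      exact ((hasDerivAt_id v).const_sub 1).mul (Real.hasDerivAt_exp v)
    exact (h1.sub h2).congr_deriv (by ring)
  have hmono : StrictMonoOn h (Set.Icc 0 1) := by
    apply strictMonoOn_of_deriv_pos (convex_Icc 0 1)
    · exact (Continuous.continuousOn (by continuity))
    · intro v hv
      rw [interior_Icc] at hv
      rw [(hd v).deriv]
      have : Real.exp (-v) < Real.exp v := Real.exp_lt_exp.mpr (by linarith [hv.1])
      have := hv.1
      nlinarith
  have := hmono (Set.mem_Icc.mpr ⟨le_refl 0, zero_le_one⟩)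
    (Set.mem_Icc.mpr ⟨hu0.le, hu1.le⟩) hu0
  simp only [hh] at this
  simp only [neg_zero, Real.exp_zero] at this
  nlinarith

lemma one_div_lt_log {y : ℝ} (hy : 0 < y) : 1 / (y + 1/2) < Real.log (1 + 1/y) := by
  set u : ℝ := 1 / (2*y + 1) with hu
  have hu0 : 0 < u := by positivity
  have hu1 : u < 1 := by rw [hu]; rw [div_lt_one (by linarith)]; linarith
  have key := aux_h_pos hu0 hu1
  have h1u : (0:ℝ) < 1 - u := by linarith
  have h2 : Real.exp (2*u) < (1 + u) / (1 - u) := by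
    rw [lt_div_iff₀ h1u]
    have := Real.exp_pos (-u)
    calc Real.exp (2*u) * (1 - u) = ((1-u) * Real.exp u) * Real.exp u := by
          rw [show (2:ℝ)*u = u + u by ring, Real.exp_add]; ring
      _ < ((1 + u) * Real.exp (-u)) * Real.exp u := by
          apply mul_lt_mul_of_pos_right key (Real.exp_pos u)
      _ = 1 + u := by rw [mul_assoc, ← Real.exp_add]; simp
  have h3 : 2*u < Real.log ((1+u)/(1-u)) := by
    rw [← Real.log_exp (2*u)]
    exact Real.log_lt_log (Real.exp_pos _) h2
  have he1 : (1+u)/(1-u) = 1 + 1/y := by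
    rw [hu]; field_simp; ring
  have he2 : 2*u = 1/(y + 1/2) := by rw [hu]; field_simp
  rw [he1, he2] at h3
  exact h3

-- (ii) φ(u) = exp(1-u) + exp(1-1/u) > 2 for u ∈ (0,1)
lemma aux_phi_gt_two {u : ℝ} (hu0 : 0 < u) (hu1 : u < 1) :
    2 < Real.exp (1 - u) + Real.exp (1 - 1/u) := by
  set φ : ℝ → ℝ := fun v => Real.exp (1 - v) + Real.exp (1 - 1/v) with hφ
  have hanti : StrictAntiOn φ (Set.Ioc 0 1) := by
    apply strictAntiOn_of_deriv_neg (convex_Ioc 0 1)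
    · apply ContinuousOn.add
      · exact Continuous.continuousOn (by continuity)
      · apply Real.continuous_exp.comp_continuousOn
        apply ContinuousOn.sub continuousOn_const
        exact continuousOn_const.div continuousOn_id (fun v hv => ne_of_gt hv.1)
    · intro v hv
      rw [interior_Ioc] at hv
      obtain ⟨hv0, hv1⟩ := hv
      have hdphi : HasDerivAt φ (-Real.exp (1 - v) + (1/v^2) * Real.exp (1 - 1/v)) v := by
        have h1 : HasDerivAt (fun w : ℝ => Real.exp (1 - w)) (-Real.exp (1-v)) v := by
          have := (Real.hasDerivAt_exp (1-v)).comp v ((hasDerivAt_id v).const_sub 1)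
          exact this.congr_deriv (by ring)
        have h2 : HasDerivAt (fun w : ℝ => Real.exp (1 - 1/w)) ((1/v^2) * Real.exp (1-1/v)) v := by
          have hinner : HasDerivAt (fun w : ℝ => 1 - 1/w) (1/v^2) v := by
            have := (hasDerivAt_inv (ne_of_gt hv0)).const_sub 1
            rw [show (fun w : ℝ => 1 - 1/w) = fun w => 1 - w⁻¹ by ext w; rw [one_div]]
            exact this.congr_deriv (by rw [one_div]; ring)
          have := (Real.hasDerivAt_exp (1-1/v)).comp v hinner
          exact this.congr_deriv (by ring)
        exact h1.add h2
      rw [hdphi.deriv]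
      -- need (1/v^2) * exp(1-1/v) < exp(1-v), i.e. exp(v - 1/v) < v^2
      have hkey : Real.exp (v - 1/v) < v^2 := by
        have hlog : v - 1/v < 2 * Real.log v := by
          set w := Real.log v with hw
          have hw0 : w < 0 := Real.log_neg hv0 hv1
          have hsinh : Real.sinh w < w := Real.sinh_lt_self_iff.mpr hw0
          rw [Real.sinh_eq] at hsinh
          have hv_eq : v = Real.exp w := (Real.exp_log hv0).symm
          rw [hv_eq, one_div, ← Real.exp_neg]
          nlinarith [hsinh]
        calc Real.exp (v - 1/v) < Real.exp (2 * Real.log v) := Real.exp_lt_exp.mpr hlog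
          _ = v^2 := by rw [show (2:ℝ) * Real.log v = Real.log v + Real.log v by ring,
              Real.exp_add, Real.exp_log hv0]; ring
      have h2 : (1/v^2) * Real.exp (1 - 1/v) < Real.exp (1 - v) := by
        rw [div_mul_eq_mul_div, one_mul, div_lt_iff₀ (by positivity)]
        calc Real.exp (1 - 1/v) = Real.exp (1 - v) * Real.exp (v - 1/v) := by
              rw [← Real.exp_add]; ring_nf
          _ < Real.exp (1 - v) * v^2 := by
              exact mul_lt_mul_of_pos_left hkey (Real.exp_pos _)
          _ = Real.exp (1-v) * v^2 := rfl
      linarith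
  have := hanti (Set.mem_Ioc.mpr ⟨hu0, hu1.le⟩) (Set.mem_Ioc.mpr ⟨zero_lt_one, le_refl 1⟩) hu1
  simp only [hφ] at this
  norm_num [one_div] at this ⊢
  linarith [this]

-- exp s - 1 ≤ s * exp s
lemma exp_sub_one_le {s : ℝ} : Real.exp s - 1 ≤ s * Real.exp s := by
  have h := Real.add_one_le_exp (-s)
  have := Real.exp_pos s
  have hmul : (1 - s) * Real.exp s ≤ Real.exp (-s) * Real.exp s := by
    apply mul_le_mul_of_nonneg_right _ this.le
    linarith
  rw [← Real.exp_add] at hmul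
  simp at hmul
  nlinarith

-- Step A: F (y+1) < F y where F y = digamma (y + 1/2) - log y
lemma stepA {y : ℝ} (hy : 0 < y) :
    digamma (y + 1 + 1/2) - Real.log (y + 1) < digamma (y + 1/2) - Real.log y := by
  have hrec : digamma (y + 1 + 1/2) = digamma (y + 1/2) + 1/(y + 1/2) := by
    have := digamma_rec (show (0:ℝ) < y + 1/2 by linarith)
    rw [show y + 1/2 + 1 = y + 1 + 1/2 by ring] at this
    exact this
  have hlog : Real.log (y+1) - Real.log y = Real.log (1 + 1/y) := by
    rw [← Real.log_div (by linarith) hy.ne']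
    congr 1
    field_simp
  have := one_div_lt_log hy
  linarith [hrec, hlog, this]

-- lower bound for F
lemma Flb {y : ℝ} (hy : 1 ≤ y) : -(1/y) ≤ digamma (y + 1/2) - Real.log y := by
  have hy0 : (0:ℝ) < y := by linarith
  have h1 : Real.log (y - 1/2) ≤ digamma (y + 1/2) := by
    have := log_le_digamma (show (0:ℝ) < y - 1/2 by linarith)
    rw [show y - 1/2 + 1 = y + 1/2 by ring] at this
    exact this
  have h2 : Real.log y - Real.log (y - 1/2) ≤ 1/y := by
    rw [← Real.log_div hy0.ne' (by linarith : y - 1/2 ≠ 0)]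
    have h3 : Real.log (y / (y - 1/2)) ≤ y / (y - 1/2) - 1 :=
      Real.log_le_sub_one_of_pos (div_pos hy0 (by linarith))
    have h4 : y / (y - 1/2) - 1 ≤ 1/y := by
      rw [div_sub_one (by linarith : y - 1/2 ≠ 0), div_le_div_iff₀ (by linarith) hy0]
      ring_nf
      nlinarith
    linarith
  linarith

lemma keyA {x : ℝ} (hx : 0 < x) : Real.log x < digamma (x + 1/2) := by
  set F : ℝ → ℝ := fun y => digamma (y + 1/2) - Real.log y with hF
  have hstep : ∀ y : ℝ, 0 < y → F (y + 1) < F y := fun y hy => stepA hy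
  have hmono : ∀ n : ℕ, F (x + 1 + n) ≤ F (x + 1) := by
    intro n
    induction n with
    | zero => simp
    | succ n ih =>
      have h := hstep (x + 1 + n) (by positivity)
      push_cast
      calc F (x + 1 + (n + 1)) = F ((x + 1 + n) + 1) := by ring_nf
        _ ≤ F (x + 1 + n) := h.le
        _ ≤ F (x + 1) := ih
  have hlim : Filter.Tendsto (fun n : ℕ => -(1/(x + 1 + n))) Filter.atTop (nhds 0) := by
    rw [show (0:ℝ) = -0 by norm_num]
    apply Filter.Tendsto.neg
    simp only [one_div]
    apply Filter.Tendsto.comp tendsto_inv_atTop_zero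
    apply Filter.tendsto_atTop_add_const_left
    exact tendsto_natCast_atTop_atTop
  have hF1 : 0 ≤ F (x + 1) := by
    apply le_of_tendsto hlim
    filter_upwards with n
    have hge1 : (1:ℝ) ≤ x + 1 + n := by
      have := Nat.cast_nonneg (α := ℝ) n
      linarith
    calc -(1/(x+1+n)) ≤ F (x + 1 + n) := Flb hge1
      _ ≤ F (x + 1) := hmono n
  have := hstep x hx
  have hFx : 0 < F x := lt_of_le_of_lt hF1 this
  simpa [hF] using hFx

lemma stepB {y : ℝ} (hy : 0 < y) :
    digamma y + Real.log (Real.exp (1/y) - 1) <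
      digamma (y+1) + Real.log (Real.exp (1/(y+1)) - 1) := by
  rw [digamma_rec hy]
  have hA : (0:ℝ) < Real.exp (1/y) - 1 := by
    have h1y : (0:ℝ) < 1/y := by positivity
    have := Real.add_one_lt_exp h1y.ne'; linarith
  have hB : (0:ℝ) < Real.exp (1/(y+1)) - 1 := by
    have h1y : (0:ℝ) < 1/(y+1) := by positivity
    have := Real.add_one_lt_exp h1y.ne'; linarith
  have hkey : 2 * Real.exp (1/y) < Real.exp (1/y + 1/(y+1)) + 1 := by
    set u : ℝ := y/(y+1) with hu
    have hu0 : 0 < u := by positivity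
    have hu1 : u < 1 := by rw [hu, div_lt_one (by linarith)]; linarith
    have h := aux_phi_gt_two hu0 hu1
    have hmul := mul_lt_mul_of_pos_right h (Real.exp_pos (1/u - 1))
    have e1 : (Real.exp (1-u) + Real.exp (1-1/u)) * Real.exp (1/u - 1)
        = Real.exp (1/u - u) + 1 := by
      rw [add_mul, ← Real.exp_add, ← Real.exp_add, show (1-u)+(1/u-1) = 1/u - u by ring,
        show (1-1/u)+(1/u-1) = (0:ℝ) by ring, Real.exp_zero]
    have e2 : (1:ℝ)/u - 1 = 1/y := by rw [hu]; field_simp; ring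
    have e3 : (1:ℝ)/u - u = 1/y + 1/(y+1) := by rw [hu]; field_simp; ring
    rw [e1, e2, e3] at hmul
    linarith
  have h2 : Real.exp (1/y) - 1 < Real.exp (1/y) * (Real.exp (1/(y+1)) - 1) := by
    have he : Real.exp (1/y) * Real.exp (1/(y+1)) = Real.exp (1/y + 1/(y+1)) :=
      (Real.exp_add _ _).symm
    nlinarith
  have h3 := Real.log_lt_log hA h2
  rw [Real.log_mul (Real.exp_pos _).ne' hB.ne', Real.log_exp] at h3
  linarith

lemma Gub {y : ℝ} (hy : 0 < y) :
    digamma y + Real.log (Real.exp (1/y) - 1) ≤ 1/y := by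
  have hA : (0:ℝ) < Real.exp (1/y) - 1 := by
    have h1y : (0:ℝ) < 1/y := by positivity
    have := Real.add_one_lt_exp h1y.ne'; linarith
  have h1 : digamma y ≤ Real.log y := digamma_le_log hy
  have h2 : Real.log (Real.exp (1/y) - 1) ≤ 1/y - Real.log y := by
    have hle : Real.exp (1/y) - 1 ≤ (1/y) * Real.exp (1/y) := exp_sub_one_le
    have := Real.log_le_log hA hle
    rw [Real.log_mul (by positivity) (Real.exp_pos _).ne', Real.log_exp, one_div,
      Real.log_inv, neg_add_eq_sub] at this
    rw [show (1:ℝ)/y = y⁻¹ by rw [one_div]]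
    exact this
  linarith

lemma keyB {t : ℝ} (ht : 0 < t) :
    digamma t + Real.log (Real.exp (1/t) - 1) < 0 := by
  set G : ℝ → ℝ := fun y => digamma y + Real.log (Real.exp (1/y) - 1) with hG
  have hstep : ∀ y : ℝ, 0 < y → G y < G (y + 1) := fun y hy => stepB hy
  have hmono : ∀ n : ℕ, G (t + 1) ≤ G (t + 1 + n) := by
    intro n
    induction n with
    | zero => simp
    | succ n ih =>
      have h := hstep (t + 1 + n) (by positivity)
      push_cast
      calc G (t + 1) ≤ G (t + 1 + n) := ih
        _ ≤ G ((t + 1 + n) + 1) := h.le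
        _ = G (t + 1 + (n + 1)) := by ring_nf
  have hlim : Filter.Tendsto (fun n : ℕ => 1/(t + 1 + n)) Filter.atTop (nhds 0) := by
    simp only [one_div]
    apply Filter.Tendsto.comp tendsto_inv_atTop_zero
    apply Filter.tendsto_atTop_add_const_left
    exact tendsto_natCast_atTop_atTop
  have hG1 : G (t + 1) ≤ 0 := by
    apply ge_of_tendsto hlim
    filter_upwards with n
    calc G (t + 1) ≤ G (t + 1 + n) := hmono n
      _ ≤ 1/(t + 1 + n) := Gub (by positivity)
  have := hstep t ht
  have : G t < 0 := lt_of_lt_of_le this hG1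
  simpa [hG] using this

theorem digamma_log_bounds (x : ℝ) (hx : 0 < x) :
    digamma (1 / Real.log (1 + 1 / x)) < Real.log x ∧
      Real.log x < digamma (x + 1 / 2) := by
  constructor
  · have h1x : (0:ℝ) < 1/x := by positivity
    have hlogpos : 0 < Real.log (1 + 1/x) := Real.log_pos (by linarith)
    set t : ℝ := 1 / Real.log (1 + 1/x) with hT
    have ht : 0 < t := by positivity
    have h := keyB ht
    have hexp : Real.exp (1/t) = 1 + 1/x := by
      rw [hT, one_div_one_div]
      exact Real.exp_log (by linarith)
    rw [hexp, show (1:ℝ) + 1/x - 1 = 1/x by ring, one_div, Real.log_inv] at h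
    linarith
  · exact keyA hx
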